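/- Let φ ∈ V be a dominant weight, i.e. ⟨φ, α∨⟩ ≥ 0 for all α ∈ Π, and let w ∈ W be X-reduced. Write (φ − wφ) + Σ_{α ∈ I(w)} α = Σ_{α∈Π} c_α α, and suppose its Y-coefficient Σ_{α∈Y} c_α equals j. Then w ∈ W(Y^(j)), the subgroup generated by the simple reflections at simple roots within distance less than j from Y. (Note that (φ − wφ) + Σ_{α∈I(w)} α equals φ − w·φ, where · denotes the dot action of W.) -/

import Mathlib

/-!
A (possibly infinite) reduced crystallographic root system with a fixed system of simple
roots.  Since the simple roots `Π` are linearly independent and every root is a linear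
combination of them, we may coordinatize: the span of `Π` is identified with the free
module `ι →₀ ℚ` on the index set `ι` of simple roots, the simple root indexed by `i`
being `Finsupp.single i 1`.  The coefficients `c_α` of an element `γ = ∑_{α ∈ Π} c_α α`
are then just the values `γ i`, and `supp γ` is `γ.support`.
-/

/-- A reduced crystallographic root system (possibly infinite) together with a chosen set
of simple roots, coordinatized in the basis of simple roots.  The field `coroot α` is the
linear functional `⟨·, α∨⟩` (its values are only constrained for `α ∈ Δ`). -/
structure SimpleRootSystem (ι : Type*) where
  /-- The set of roots. -/
  Δ : Set (ι →₀ ℚ)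
  /-- The coroot pairing `β ↦ ⟨β, α∨⟩`. -/
  coroot : (ι →₀ ℚ) → ((ι →₀ ℚ) →ₗ[ℚ] ℚ)
  /-- Roots are nonzero. -/
  zero_not_mem : (0 : ι →₀ ℚ) ∉ Δ
  /-- `⟨α, α∨⟩ = 2`. -/
  pairing_self : ∀ α ∈ Δ, coroot α α = 2
  /-- Crystallographic: `⟨β, α∨⟩ ∈ ℤ`. -/
  pairing_int : ∀ α ∈ Δ, ∀ β ∈ Δ, ∃ n : ℤ, coroot α β = (n : ℚ)
  /-- The reflection `s_α(β) = β - ⟨β, α∨⟩ α` maps roots to roots. -/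
  reflect_mem : ∀ α ∈ Δ, ∀ β ∈ Δ, β - coroot α β • α ∈ Δ
  /-- Reduced: the only multiples of a root `α` that are roots are `±α`. -/
  reduced : ∀ α ∈ Δ, ∀ c : ℚ, c • α ∈ Δ → c = 1 ∨ c = -1
  /-- Every simple root is a root. -/
  simple_mem : ∀ i : ι, (Finsupp.single i 1 : ι →₀ ℚ) ∈ Δ
  /-- Every root is a linear combination of the simple roots whose coefficients are either
  all nonnegative integers or all nonpositive integers. -/
  coeff_sign : ∀ α ∈ Δ, (∀ i, ∃ n : ℕ, α i = (n : ℚ)) ∨ (∀ i, ∃ n : ℕ, α i = -(n : ℚ))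

namespace SimpleRootSystem

variable {ι : Type*}

/-- The simple root indexed by `i`. -/
noncomputable def simple (i : ι) : ι →₀ ℚ := Finsupp.single i 1

variable (R : SimpleRootSystem ι)

/-- The positive roots `Δ⁺`. -/
def posRoots : Set (ι →₀ ℚ) := {α ∈ R.Δ | ∀ i, 0 ≤ α i}

/-- The negative roots `Δ⁻`. -/
def negRoots : Set (ι →₀ ℚ) := {α ∈ R.Δ | ∀ i, α i ≤ 0}

/-- The reflection `s_α : v ↦ v - ⟨v, α∨⟩ α`, as a linear endomorphism. -/
noncomputable def reflection (α : ι →₀ ℚ) : Module.End ℚ (ι →₀ ℚ) :=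
  LinearMap.id - (R.coroot α).smulRight α

/-- The Weyl group `W`, the group generated by the simple reflections, realized as the
closure of the set of simple reflections inside the endomorphism monoid (each simple
reflection is an involution, so this closure is closed under inverses). -/
noncomputable def weylGroup : Submonoid (Module.End ℚ (ι →₀ ℚ)) :=
  Submonoid.closure {g | ∃ i : ι, g = R.reflection (simple i)}

/-- The length `l(w)`: the least `k` such that `w` is a product of `k` simple
reflections. -/
noncomputable def length (w : Module.End ℚ (ι →₀ ℚ)) : ℕ :=
  sInf {k | ∃ f : Fin k → ι,
    w = (List.ofFn fun j => R.reflection (simple (f j))).prod}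

/-- The inversion set `I(w) = Δ⁺ ∩ w(Δ⁻)`. -/
noncomputable def inversions (w : Module.End ℚ (ι →₀ ℚ)) : Set (ι →₀ ℚ) :=
  R.posRoots ∩ (⇑w '' R.negRoots)

/-- The Dynkin diagram: the graph on the (indices of the) simple roots in which two
distinct simple roots `α ≠ β` are adjacent iff `⟨α, β∨⟩ ≠ 0` (equivalently, in a root
system, `⟨β, α∨⟩ ≠ 0`; we state the symmetrized form). -/
noncomputable def dynkin : SimpleGraph ι where
  Adj i j := i ≠ j ∧
    (R.coroot (simple j) (simple i) ≠ 0 ∨ R.coroot (simple i) (simple j) ≠ 0)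
  symm := ⟨fun _ _ h => ⟨h.1.symm, h.2.symm⟩⟩
  loopless := ⟨fun _ h => h.1 rfl⟩

end SimpleRootSystem

namespace SimpleRootSystem

variable {ι : Type*} (R : SimpleRootSystem ι)

/-- For `X ⊆ Π`, the set `Δ(X)` of roots whose support is contained in `X`. -/
def deltaX (X : Set ι) : Set (ι →₀ ℚ) := {γ ∈ R.Δ | ↑γ.support ⊆ X}

/-- `w` is `X`-reduced if its inversion set contains no root supported in `X`. -/
noncomputable def IsXReduced (X : Set ι) (w : Module.End ℚ (ι →₀ ℚ)) : Prop :=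
  R.inversions w ∩ R.deltaX X = ∅

/-- `Y^(j)`: the set of simple roots at (extended) graph distance less than `j` from
`Y = Π \ X` in the Dynkin diagram. -/
noncomputable def yNbhd (X : Set ι) (j : ℕ) : Set ι :=
  {i | ∃ y, y ∉ X ∧ R.dynkin.edist i y < (j : ℕ∞)}

/-- The subgroup (realized as a submonoid of the endomorphism monoid, as in `weylGroup`)
generated by the simple reflections `s_α` for `α` in a set `s` of simple roots. -/
noncomputable def standardParabolic (s : Set ι) : Submonoid (Module.End ℚ (ι →₀ ℚ)) :=
  Submonoid.closure {g | ∃ i ∈ s, g = R.reflection (simple i)}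

end SimpleRootSystem

/-! ### Auxiliary development -/

namespace SimpleRootSystem

variable {ι : Type*} (R : SimpleRootSystem ι)

/-- Coordinatewise nonnegative. -/
def IsPos (β : ι →₀ ℚ) : Prop := ∀ i, 0 ≤ β i

/-- Coordinatewise nonpositive. -/
def IsNeg (β : ι →₀ ℚ) : Prop := ∀ i, β i ≤ 0

/-- The simple reflection at `i`. -/
noncomputable def sr (i : ι) : Module.End ℚ (ι →₀ ℚ) := R.reflection (simple i)

/-- Product of simple reflections along a word. -/
noncomputable def wrd (L : List ι) : Module.End ℚ (ι →₀ ℚ) := (L.map (R.sr)).prod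

lemma reflection_apply (α v : ι →₀ ℚ) :
    R.reflection α v = v - R.coroot α v • α := by
  simp [SimpleRootSystem.reflection]

lemma sr_apply (i : ι) (v : ι →₀ ℚ) :
    R.sr i v = v - R.coroot (simple i) v • simple i := reflection_apply ..

lemma coroot_simple_self (i : ι) : R.coroot (simple i) (simple i) = 2 :=
  R.pairing_self _ (R.simple_mem i)

lemma sr_simple_self (i : ι) : R.sr i (simple i) = - simple i := by
  rw [sr_apply, coroot_simple_self]
  module

lemma sr_sr (i : ι) (v : ι →₀ ℚ) : R.sr i (R.sr i v) = v := by
  rw [sr_apply, sr_apply, map_sub, map_smul, coroot_simple_self, smul_eq_mul]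
  module

lemma sr_mul_sr (i : ι) : R.sr i * R.sr i = 1 :=
  LinearMap.ext fun v => sr_sr R i v

lemma sr_mem {β : ι →₀ ℚ} (hβ : β ∈ R.Δ) (i : ι) : R.sr i β ∈ R.Δ := by
  rw [sr_apply]
  exact R.reflect_mem _ (R.simple_mem i) _ hβ

lemma neg_mem {β : ι →₀ ℚ} (hβ : β ∈ R.Δ) : -β ∈ R.Δ := by
  have := R.reflect_mem _ hβ _ hβ
  rwa [R.pairing_self _ hβ, show β - (2:ℚ) • β = -β by module] at this

@[simp] lemma wrd_nil : R.wrd ([] : List ι) = 1 := rfl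

lemma wrd_cons (a : ι) (L : List ι) : R.wrd (a :: L) = R.sr a * R.wrd L := by
  simp [wrd]

lemma wrd_append (A B : List ι) : R.wrd (A ++ B) = R.wrd A * R.wrd B := by
  simp [wrd]

lemma wrd_concat (A : List ι) (i : ι) : R.wrd (A ++ [i]) = R.wrd A * R.sr i := by
  simp [wrd]

lemma wrd_mem {β : ι →₀ ℚ} (hβ : β ∈ R.Δ) (L : List ι) : R.wrd L β ∈ R.Δ := by
  induction L with
  | nil => simpa using hβ
  | cons a M ih =>
      rw [wrd_cons, Module.End.mul_apply]
      exact R.sr_mem ih a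

lemma wrd_reverse_mul (L : List ι) : R.wrd L.reverse * R.wrd L = 1 := by
  induction L with
  | nil => simp
  | cons a M ih =>
      rw [List.reverse_cons, wrd_concat, wrd_cons, mul_assoc, ← mul_assoc (R.sr a),
        sr_mul_sr, one_mul, ih]

lemma wrd_mul_reverse (L : List ι) : R.wrd L * R.wrd L.reverse = 1 := by
  have := R.wrd_reverse_mul L.reverse
  rwa [List.reverse_reverse] at this

lemma wrd_reverse_apply (L : List ι) (v : ι →₀ ℚ) :
    R.wrd L.reverse (R.wrd L v) = v := by
  rw [← Module.End.mul_apply, wrd_reverse_mul, Module.End.one_apply]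

lemma wrd_apply_reverse (L : List ι) (v : ι →₀ ℚ) :
    R.wrd L (R.wrd L.reverse v) = v := by
  rw [← Module.End.mul_apply, wrd_mul_reverse, Module.End.one_apply]

lemma pos_or_neg {β : ι →₀ ℚ} (hβ : β ∈ R.Δ) : IsPos β ∨ IsNeg β := by
  rcases R.coeff_sign β hβ with h | h
  · left; intro i; obtain ⟨n, hn⟩ := h i; rw [hn]; positivity
  · right; intro i; obtain ⟨n, hn⟩ := h i; rw [hn]; simp

lemma not_pos_and_neg {β : ι →₀ ℚ} (hβ : β ∈ R.Δ) (h1 : IsPos β) (h2 : IsNeg β) :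
    False := by
  have : β = 0 := by
    ext i; exact le_antisymm (h2 i) (h1 i)
  exact R.zero_not_mem (this ▸ hβ)

lemma isNeg_neg_iff {β : ι →₀ ℚ} : IsNeg (-β) ↔ IsPos β := by
  constructor <;> intro h i <;> have := h i <;> simp_all [IsPos, IsNeg]

lemma isPos_neg_iff {β : ι →₀ ℚ} : IsPos (-β) ↔ IsNeg β := by
  constructor <;> intro h i <;> have := h i <;> simp_all [IsPos, IsNeg]

open scoped Classical in
@[simp] lemma simple_apply (i k : ι) : (simple i : ι →₀ ℚ) k = if i = k then 1 else 0 := by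
  simp [SimpleRootSystem.simple, Finsupp.single_apply]

lemma isPos_simple (i : ι) : IsPos (simple i : ι →₀ ℚ) := by
  intro k; rw [simple_apply]; split <;> norm_num

/-- A positive root other than `α_i` stays positive under `s_i`. -/
lemma sr_pos {β : ι →₀ ℚ} (hβ : β ∈ R.Δ) (hpos : IsPos β) {i : ι}
    (hne : β ≠ simple i) : IsPos (R.sr i β) := by
  by_cases hall : ∀ k, k ≠ i → β k = 0
  · exfalso
    have hβeq : β = (β i) • simple i := by
      ext k
      by_cases hk : k = i
      · subst hk; simp
      · rw [hall k hk]; simp [Ne.symm hk]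
    have := R.reduced _ (R.simple_mem i) (β i) (hβeq ▸ hβ)
    rcases this with h1 | h1
    · exact hne (by rw [hβeq, h1, one_smul])
    · have h2 := hpos i
      rw [hβeq, h1] at h2
      simp at h2
      norm_num at h2
  · push_neg at hall
    obtain ⟨k, hk, hkne⟩ := hall
    have hcoord : R.sr i β k = β k := by
      rw [sr_apply]
      simp [Ne.symm hk]
    rcases R.pos_or_neg (R.sr_mem hβ i) with h | h
    · exact h
    · exfalso
      have := h k
      rw [hcoord] at this
      exact hkne (le_antisymm this (hpos k))

lemma sr_neg {β : ι →₀ ℚ} (hβ : β ∈ R.Δ) (hneg : IsNeg β) {i : ι}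
    (hne : β ≠ -simple i) : IsNeg (R.sr i β) := by
  have h1 : IsPos (R.sr i (-β)) := by
    refine R.sr_pos (R.neg_mem hβ) (isPos_neg_iff.2 hneg) ?_
    intro h
    exact hne (by rw [← neg_neg β, h])
  rw [map_neg] at h1
  exact isPos_neg_iff.1 h1

section Conj

variable (p : ι) (f g : (ι →₀ ℚ) →ₗ[ℚ] ℚ)

/-- Iteration: if `f, g` are two "coroot functionals" for the simple root `α_p` whose
associated reflections preserve `Δ`, then from any root we may repeatedly add
`(g-f)(β)` copies of `α_p` and stay in `Δ`. -/
lemma iter_aux (hfΔ : ∀ β ∈ R.Δ, β - f β • simple p ∈ R.Δ)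
    (hgΔ : ∀ β ∈ R.Δ, β - g β • simple p ∈ R.Δ)
    (hfp : f (simple p) = 2) (hgp : g (simple p) = 2) :
    ∀ n : ℕ, ∀ β ∈ R.Δ, β + ((n : ℚ) * (g β - f β)) • simple p ∈ R.Δ := by
  intro n
  induction n with
  | zero => intro β hβ; simpa using hβ
  | succ n ih =>
      intro β hβ
      have hβ' := ih β hβ
      set c := g β - f β with hc
      set β' := β + ((n:ℚ) * c) • simple p with hβ'def
      have hδ := hgΔ β' hβ'
      set δ := β' - g β' • simple p with hδdef
      have hδ' := hfΔ δ hδ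
      have hgβ' : g β' = g β + (n:ℚ) * c * 2 := by
        rw [hβ'def, map_add, map_smul, hgp, smul_eq_mul]
      have hfβ' : f β' = f β + (n:ℚ) * c * 2 := by
        rw [hβ'def, map_add, map_smul, hfp, smul_eq_mul]
      have hfδ : f δ = f β' - g β' * 2 := by
        rw [hδdef, map_sub, map_smul, hfp, smul_eq_mul]
      have heq : δ - f δ • simple p = β + (((n:ℚ)+1) * c) • simple p := by
        rw [hδdef, hβ'def, hfδ, hgβ', hfβ', hc]
        module
      rw [heq] at hδ'
      convert hδ' using 3
      push_cast
      ring

lemma coroot_unique (hfΔ : ∀ β ∈ R.Δ, β - f β • simple p ∈ R.Δ)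
    (hgΔ : ∀ β ∈ R.Δ, β - g β • simple p ∈ R.Δ)
    (hfp : f (simple p) = 2) (hgp : g (simple p) = 2) :
    ∀ β ∈ R.Δ, f β = g β := by
  intro β hβ
  by_contra hne
  have hc0 : g β - f β ≠ 0 := fun h => hne (by linarith)
  set c := g β - f β with hc
  have keyP : ∀ n : ℕ, β + ((n:ℚ) * c) • simple p ∈ R.Δ := fun n =>
    iter_aux R p f g hfΔ hgΔ hfp hgp n β hβ
  have keyN : ∀ n : ℕ, β + (-((n:ℚ) * c)) • simple p ∈ R.Δ := by
    intro n
    have h2 := iter_aux R p g f hgΔ hfΔ hgp hfp n β hβ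
    convert h2 using 3
    rw [hc]; ring
  obtain ⟨n, hn⟩ := exists_nat_gt (|β p| / |c|)
  have habs : |β p| < (n:ℚ) * |c| := by
    rw [div_lt_iff₀ (abs_pos.2 hc0)] at hn
    linarith [hn]
  have hmemP : β + ((n:ℚ) * |c|) • simple p ∈ R.Δ := by
    rcases abs_choice c with h | h
    · rw [h]; exact keyP n
    · rw [h]
      convert keyN n using 3
      ring
  have hmemN : β + (-((n:ℚ) * |c|)) • simple p ∈ R.Δ := by
    rcases abs_choice c with h | h
    · rw [h]; exact keyN n
    · rw [h]
      convert keyP n using 3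
      ring
  have hcoP : (β + ((n:ℚ) * |c|) • simple p) p = β p + (n:ℚ) * |c| := by
    simp
  have hcoN : (β + (-((n:ℚ) * |c|)) • simple p) p = β p - (n:ℚ) * |c| := by
    simp; ring
  have habs' := abs_lt.1 habs
  have hpos : IsPos (β + ((n:ℚ) * |c|) • simple p) := by
    rcases R.pos_or_neg hmemP with h | h
    · exact h
    · exfalso
      have := h p
      rw [hcoP] at this
      linarith [habs'.1]
  have hneg : IsNeg (β + (-((n:ℚ) * |c|)) • simple p) := by
    rcases R.pos_or_neg hmemN with h | h
    · exfalso
      have := h p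
      rw [hcoN] at this
      linarith [habs'.2]
    · exact h
  have hzero : ∀ k, k ≠ p → β k = 0 := by
    intro k hk
    have h1 := hpos k
    have h2 := hneg k
    have e1 : (β + ((n:ℚ) * |c|) • simple p) k = β k := by
      simp [Ne.symm hk]
    have e2 : (β + (-((n:ℚ) * |c|)) • simple p) k = β k := by
      simp [Ne.symm hk]
    rw [e1] at h1; rw [e2] at h2
    linarith
  have hβeq : β = (β p) • simple p := by
    ext k
    by_cases hk : k = p
    · subst hk; simp
    · rw [hzero k hk]; simp [Ne.symm hk]
  rcases R.reduced _ (R.simple_mem p) (β p) (hβeq ▸ hβ) with h1 | h1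
  · have : β = simple p := by rw [hβeq, h1, one_smul]
    subst this
    rw [hc, hgp, hfp] at hc0
    simp at hc0
  · have hβn : β = -simple p := by rw [hβeq, h1]; module
    subst hβn
    rw [hc, map_neg, map_neg, hgp, hfp] at hc0
    simp at hc0

end Conj

/-- If a word maps the simple root `α_m` to the simple root `α_p`, then conjugating the
simple reflection `s_m` by the word gives `s_p`. -/
lemma wrd_conj {M : List ι} {m p : ι} (h : R.wrd M (simple m) = simple p) :
    R.wrd M * R.sr m = R.sr p * R.wrd M := by
  have hu'p : R.wrd M.reverse (simple p) = simple m := by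
    rw [← h, wrd_reverse_apply]
  have hgp : ((R.coroot (simple m)).comp (R.wrd M.reverse)) (simple p) = 2 := by
    simp only [LinearMap.comp_apply]; rw [hu'p]; exact R.coroot_simple_self m
  have hfΔ : ∀ β ∈ R.Δ, β - (R.coroot (simple p)) β • simple p ∈ R.Δ := fun β hβ =>
    R.reflect_mem _ (R.simple_mem p) _ hβ
  have hgΔ : ∀ β ∈ R.Δ,
      β - ((R.coroot (simple m)).comp (R.wrd M.reverse)) β • simple p ∈ R.Δ := by
    intro β hβ
    have hmem : R.wrd M (R.sr m (R.wrd M.reverse β)) ∈ R.Δ :=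
      R.wrd_mem (R.sr_mem (R.wrd_mem hβ M.reverse) m) M
    have heq : R.wrd M (R.sr m (R.wrd M.reverse β)) =
        β - ((R.coroot (simple m)).comp (R.wrd M.reverse)) β • simple p := by
      rw [sr_apply, map_sub, map_smul, wrd_apply_reverse, h]
      rfl
    rwa [heq] at hmem
  have key := coroot_unique R p (R.coroot (simple p))
    ((R.coroot (simple m)).comp (R.wrd M.reverse)) hfΔ hgΔ (R.coroot_simple_self p) hgp
  apply Finsupp.lhom_ext
  intro q b
  have hb : (Finsupp.single q b : ι →₀ ℚ) = b • simple q := by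
    rw [SimpleRootSystem.simple, Finsupp.smul_single]; simp
  rw [hb, map_smul, map_smul]
  congr 1
  have huq : R.wrd M (simple q) ∈ R.Δ := R.wrd_mem (R.simple_mem q) M
  have hval : R.coroot (simple m) (simple q) =
      R.coroot (simple p) (R.wrd M (simple q)) := by
    have h2 := key _ huq
    simp only [LinearMap.comp_apply] at h2
    rw [wrd_reverse_apply] at h2
    exact h2.symm
  rw [Module.End.mul_apply, Module.End.mul_apply, sr_apply (i := m), sr_apply (i := p),
    map_sub, map_smul, h, hval]

/-- The list of "prefix roots" of a word: `t_m = s_{i_1} ⋯ s_{i_{m-1}} (α_{i_m})`. -/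
noncomputable def ts : List ι → List (ι →₀ ℚ)
  | [] => []
  | a :: M => simple a :: (ts M).map (R.sr a)

@[simp] lemma ts_nil : R.ts ([] : List ι) = [] := rfl

lemma ts_cons (a : ι) (M : List ι) :
    R.ts (a :: M) = simple a :: (R.ts M).map (R.sr a) := rfl

lemma ts_concat (M : List ι) (i : ι) :
    R.ts (M ++ [i]) = R.ts M ++ [R.wrd M (simple i)] := by
  induction M with
  | nil => simp [ts_cons]
  | cons a M ih =>
      rw [List.cons_append, ts_cons, ih, ts_cons, List.map_append, wrd_cons]
      simp [Module.End.mul_apply]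

lemma ts_mem_delta {L : List ι} : ∀ {β : ι →₀ ℚ}, β ∈ R.ts L → β ∈ R.Δ := by
  induction L with
  | nil => intro β h; simp at h
  | cons a M ih =>
      intro β h
      rw [ts_cons, List.mem_cons] at h
      rcases h with h | h
      · exact h ▸ R.simple_mem a
      · rw [List.mem_map] at h
        obtain ⟨γ, hγ, rfl⟩ := h
        exact R.sr_mem (ih hγ) a

lemma ts_split_of_mem {L : List ι} : ∀ {β : ι →₀ ℚ}, β ∈ R.ts L →
    ∃ A b B, L = A ++ b :: B ∧ β = R.wrd A (simple b) := by
  induction L with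
  | nil => intro β h; simp at h
  | cons a M ih =>
      intro β h
      rw [ts_cons, List.mem_cons] at h
      rcases h with h | h
      · exact ⟨[], a, M, rfl, by simpa using h⟩
      · rw [List.mem_map] at h
        obtain ⟨γ, hγ, rfl⟩ := h
        obtain ⟨A, b, B, rfl, rfl⟩ := ih hγ
        exact ⟨a :: A, b, B, rfl, by rw [wrd_cons, Module.End.mul_apply]⟩

lemma ts_mem_of_split (A : List ι) (b : ι) (B : List ι) :
    R.wrd A (simple b) ∈ R.ts (A ++ b :: B) := by
  induction A with
  | nil => simp [ts_cons]
  | cons a A ih =>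
      rw [List.cons_append, ts_cons, wrd_cons, Module.End.mul_apply]
      exact List.mem_cons_of_mem _ (List.mem_map.2 ⟨_, ih, rfl⟩)

/-- A word is *good* (reduced, in fact) if all its prefix roots are positive. -/
def Good (L : List ι) : Prop := ∀ β ∈ R.ts L, IsPos β

/-- Sign-flip: if a word makes the positive root `β` negative, some suffix of it maps
`β` to a simple root. -/
lemma flip {β : ι →₀ ℚ} (hβ : β ∈ R.Δ) (hpos : IsPos β) :
    ∀ M : List ι, IsNeg (R.wrd M β) →
      ∃ A b B, M = A ++ b :: B ∧ R.wrd B β = simple b := by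
  intro M
  induction M with
  | nil => exact fun hneg => absurd hneg (fun hn => R.not_pos_and_neg hβ hpos (by simpa using hn))
  | cons a M ih =>
      intro hneg
      rw [wrd_cons, Module.End.mul_apply] at hneg
      have hγ : R.wrd M β ∈ R.Δ := R.wrd_mem hβ M
      rcases R.pos_or_neg hγ with hp | hn
      · by_cases hsimp : R.wrd M β = simple a
        · exact ⟨[], a, M, rfl, hsimp⟩
        · exact absurd (R.sr_pos hγ hp hsimp) fun hpp => R.not_pos_and_neg
            (R.sr_mem hγ a) hpp hneg
      · obtain ⟨A, b, B, rfl, hB⟩ := ih hn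
        exact ⟨a :: A, b, B, rfl, hB⟩

/-- Every word can be replaced by a good word with the same product, of no greater
length. -/
lemma exists_good (L : List ι) :
    ∃ L', R.wrd L' = R.wrd L ∧ L'.length ≤ L.length ∧ R.Good L' := by
  generalize hN : L.length = N
  induction N using Nat.strong_induction_on generalizing L with
  | _ N ih =>
  by_cases hg : R.Good L
  · exact ⟨L, rfl, hN.le, hg⟩
  · rw [Good] at hg
    push_neg at hg
    obtain ⟨β, hβts, hβnp⟩ := hg
    obtain ⟨A, b, B, rfl, rfl⟩ := R.ts_split_of_mem hβts
    have hβΔ : R.wrd A (simple b) ∈ R.Δ := R.wrd_mem (R.simple_mem b) A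
    have hβneg : IsNeg (R.wrd A (simple b)) := by
      rcases R.pos_or_neg hβΔ with h | h
      · exact absurd h hβnp
      · exact h
    obtain ⟨A₁, c, A₂, rfl, hA₂⟩ :=
      R.flip (R.simple_mem b) (isPos_simple b) A hβneg
    have hconj := R.wrd_conj hA₂
    have hconj' : ∀ x : Module.End ℚ (ι →₀ ℚ),
        R.wrd A₂ * (R.sr b * x) = R.sr c * (R.wrd A₂ * x) := by
      intro x; rw [← mul_assoc, hconj, mul_assoc]
    have hprod : R.wrd ((A₁ ++ c :: A₂) ++ b :: B) = R.wrd (A₁ ++ (A₂ ++ B)) := by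
      rw [wrd_append, wrd_append, wrd_cons, wrd_cons, wrd_append, wrd_append]
      simp only [mul_assoc]
      rw [hconj', ← mul_assoc (R.sr c) (R.sr c), sr_mul_sr, one_mul]
    have hlen : (A₁ ++ (A₂ ++ B)).length < N := by
      rw [← hN]
      simp only [List.length_append, List.length_cons]
      omega
    obtain ⟨L', h1, h2, h3⟩ := ih _ hlen (A₁ ++ (A₂ ++ B)) rfl
    refine ⟨L', h1.trans hprod.symm, ?_, h3⟩
    rw [← hN]
    simp only [List.length_append, List.length_cons] at h2 ⊢
    omega

lemma mem_inversions_iff {L : List ι} {β : ι →₀ ℚ} :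
    β ∈ R.inversions (R.wrd L) ↔ β ∈ R.Δ ∧ IsPos β ∧ IsNeg (R.wrd L.reverse β) := by
  constructor
  · rintro ⟨⟨hβΔ, hβpos⟩, γ, ⟨hγΔ, hγneg⟩, rfl⟩
    refine ⟨hβΔ, hβpos, ?_⟩
    rw [wrd_reverse_apply]; exact hγneg
  · rintro ⟨hβΔ, hβpos, hneg⟩
    refine ⟨⟨hβΔ, hβpos⟩, R.wrd L.reverse β, ⟨R.wrd_mem hβΔ _, hneg⟩, ?_⟩
    rw [wrd_apply_reverse]

lemma isNeg_neg_simple (i : ι) : IsNeg (-(simple i) : ι →₀ ℚ) :=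
  isNeg_neg_iff.2 (isPos_simple i)

lemma not_isNeg_simple (i : ι) : ¬ IsNeg (simple i : ι →₀ ℚ) := by
  intro h
  have := h i
  rw [simple_apply] at this
  norm_num at this

/-- For a good word, the inversion set of the product is exactly the set of prefix
roots, and these are pairwise distinct. -/
lemma inversions_eq {L : List ι} (hL : R.Good L) :
    R.inversions (R.wrd L) = {β | β ∈ R.ts L} ∧ (R.ts L).Nodup := by
  induction L using List.reverseRecOn with
  | nil =>
      refine ⟨?_, by simp⟩
      ext β
      simp only [Set.mem_setOf_eq, ts_nil, List.not_mem_nil, iff_false]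
      intro hmem
      rw [mem_inversions_iff] at hmem
      exact R.not_pos_and_neg hmem.1 hmem.2.1 (by simpa using hmem.2.2)
  | append_singleton M i ihM =>
      have hGoodM : R.Good M := fun β hβ =>
        hL β (by rw [ts_concat]; exact List.mem_append_left _ hβ)
      obtain ⟨hIM, hndM⟩ := ihM hGoodM
      have htpos : IsPos (R.wrd M (simple i)) := hL _ (by rw [ts_concat]; simp)
      have htΔ : R.wrd M (simple i) ∈ R.Δ := R.wrd_mem (R.simple_mem i) M
      have hrev : (M ++ [i]).reverse = i :: M.reverse := by simp
      have hrevap : ∀ β, R.wrd (M ++ [i]).reverse β = R.sr i (R.wrd M.reverse β) := by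
        intro β; rw [hrev, wrd_cons, Module.End.mul_apply]
      have htnotM : R.wrd M (simple i) ∉ R.ts M := by
        intro hmem
        have : R.wrd M (simple i) ∈ R.inversions (R.wrd M) := by rw [hIM]; exact hmem
        rw [mem_inversions_iff] at this
        have h2 := this.2.2
        rw [wrd_reverse_apply] at h2
        exact not_isNeg_simple i h2
      constructor
      · ext β
        simp only [Set.mem_setOf_eq, ts_concat, List.mem_append, List.mem_singleton]
        rw [mem_inversions_iff]
        constructor
        · rintro ⟨hβΔ, hβpos, hβneg⟩
          rw [hrevap] at hβneg
          have hγΔ : R.wrd M.reverse β ∈ R.Δ := R.wrd_mem hβΔ _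
          rcases R.pos_or_neg hγΔ with hp | hn
          · right
            by_contra hne
            have : R.wrd M.reverse β = simple i := by
              by_contra hsim
              exact R.not_pos_and_neg (R.sr_mem hγΔ i) (R.sr_pos hγΔ hp hsim) hβneg
            exact hne (by rw [← this, wrd_apply_reverse])
          · left
            have hm : β ∈ R.inversions (R.wrd M) := by
              rw [mem_inversions_iff]
              exact ⟨hβΔ, hβpos, hn⟩
            rwa [hIM] at hm
        · rintro (hmem | rfl)
          · have hβinv : β ∈ R.inversions (R.wrd M) := by rw [hIM]; exact hmem
            rw [mem_inversions_iff] at hβinv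
            obtain ⟨hβΔ, hβpos, hβneg⟩ := hβinv
            refine ⟨hβΔ, hβpos, ?_⟩
            rw [hrevap]
            refine R.sr_neg (R.wrd_mem hβΔ _) hβneg ?_
            intro hne
            have hβt : β = -(R.wrd M (simple i)) := by
              rw [← wrd_apply_reverse R M β, hne, map_neg]
            have : IsNeg β := hβt ▸ (isNeg_neg_iff.2 htpos)
            exact R.not_pos_and_neg hβΔ hβpos this
          · refine ⟨htΔ, htpos, ?_⟩
            rw [hrevap, wrd_reverse_apply, sr_simple_self]
            exact isNeg_neg_simple i
      · rw [ts_concat]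
        rw [List.nodup_append]
        exact ⟨hndM, List.nodup_singleton _, by
            intro a ha b hb hab; rw [List.mem_singleton] at hb; subst hb; subst hab; exact htnotM ha⟩

/-- Dominance: for a dominant weight `φ` and good word `L`, `φ - w φ` is a nonnegative
combination of simple roots. -/
lemma good_dom {L : List ι} (hL : R.Good L) {φ : ι →₀ ℚ}
    (hdom : ∀ i, 0 ≤ R.coroot (simple i) φ) : IsPos (φ - R.wrd L φ) := by
  induction L using List.reverseRecOn with
  | nil => intro k; simp
  | append_singleton M i ihM =>
      have hGoodM : R.Good M := fun β hβ =>
        hL β (by rw [ts_concat]; exact List.mem_append_left _ hβ)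
      have htpos : IsPos (R.wrd M (simple i)) := hL _ (by rw [ts_concat]; simp)
      have hkey : φ - R.wrd (M ++ [i]) φ
          = (φ - R.wrd M φ) + R.coroot (simple i) φ • R.wrd M (simple i) := by
        rw [wrd_concat, Module.End.mul_apply, sr_apply, map_sub, map_smul]
        module
      intro k
      rw [hkey]
      have h1 := ihM hGoodM k
      have h2 : 0 ≤ (R.coroot (simple i) φ • R.wrd M (simple i)) k := by
        rw [Finsupp.smul_apply]
        exact mul_nonneg (hdom i) (htpos k)
      rw [Finsupp.add_apply]
      exact add_nonneg h1 h2

lemma ts_length (L : List ι) : (R.ts L).length = L.length := by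
  induction L with
  | nil => rfl
  | cons a M ih => simp [ts_cons, ih]

lemma wrd_fix {A : List ι} {b : ι}
    (h : ∀ a ∈ A, R.coroot (simple a) (simple b) = 0) :
    R.wrd A (simple b) = simple b := by
  induction A with
  | nil => simp
  | cons a A ih =>
      rw [wrd_cons, Module.End.mul_apply, ih (fun x hx => h x (List.mem_cons_of_mem a hx)),
        sr_apply, h a List.mem_cons_self, zero_smul, sub_zero]

open scoped Classical in
/-- The `Y`-coefficient functional `γ ↦ ∑_{i ∉ X} γ i`, as a linear map. -/
noncomputable def Yc (X : Set ι) : (ι →₀ ℚ) →ₗ[ℚ] ℚ :=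
  Finsupp.lsum ℚ (fun i => if i ∈ X then (0 : ℚ →ₗ[ℚ] ℚ) else LinearMap.id)

open scoped Classical in
lemma Yc_apply (X : Set ι) (γ : ι →₀ ℚ) :
    Yc X γ = ∑ i ∈ γ.support, if i ∈ X then 0 else γ i := by
  rw [Yc, Finsupp.lsum_apply, Finsupp.sum]
  apply Finset.sum_congr rfl
  intro i _
  by_cases h : i ∈ X <;> simp [h]

lemma finsum_mem_compl_eq_Yc (X : Set ι) (γ : ι →₀ ℚ) :
    ∑ᶠ i ∈ Xᶜ, γ i = Yc X γ := by
  classical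
  have hfin : (Xᶜ ∩ Function.support fun i => γ i).Finite :=
    Set.Finite.subset γ.finite_support fun i hi => hi.2
  rw [finsum_mem_eq_sum _ hfin, Yc_apply]
  have h1 : hfin.toFinset = γ.support.filter (fun i => i ∉ X) := by
    ext i
    simp only [Set.Finite.mem_toFinset, Set.mem_inter_iff, Set.mem_compl_iff,
      Function.mem_support, Finset.mem_filter, Finsupp.mem_support_iff]
    tauto
  rw [h1, Finset.sum_filter]
  apply Finset.sum_congr rfl
  intro i _
  by_cases h : i ∈ X <;> simp [h]

lemma Yc_nonneg {X : Set ι} {γ : ι →₀ ℚ} (h : IsPos γ) : 0 ≤ Yc X γ := by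
  classical
  rw [Yc_apply]
  apply Finset.sum_nonneg
  intro i _
  by_cases hx : i ∈ X <;> simp [hx, h i]

lemma Yc_ge_one {X : Set ι} {β : ι →₀ ℚ} (hβ : β ∈ R.Δ) (hpos : IsPos β)
    (hns : ¬ ((β.support : Set ι) ⊆ X)) : 1 ≤ Yc X β := by
  classical
  obtain ⟨i₀, hi₀s, hi₀X⟩ := Set.not_subset.1 hns
  have hi₀mem : i₀ ∈ β.support := hi₀s
  have hi₀ : β i₀ ≠ 0 := Finsupp.mem_support_iff.1 hi₀mem
  have h1 : 1 ≤ β i₀ := by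
    rcases R.coeff_sign β hβ with h | h
    · obtain ⟨n, hn⟩ := h i₀
      rw [hn] at hi₀ ⊢
      have hn0 : n ≠ 0 := by exact_mod_cast hi₀
      exact_mod_cast Nat.one_le_iff_ne_zero.2 hn0
    · obtain ⟨n, hn⟩ := h i₀
      have h2 := hpos i₀
      rw [hn] at h2 hi₀
      have hn0 : (n:ℚ) = 0 := le_antisymm (by linarith) (Nat.cast_nonneg n)
      rw [hn0] at hi₀; simp at hi₀
  rw [Yc_apply]
  calc (1:ℚ) ≤ β i₀ := h1
    _ = if i₀ ∈ X then 0 else β i₀ := by simp [hi₀X]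
    _ ≤ ∑ i ∈ β.support, if i ∈ X then 0 else β i := by
        refine Finset.single_le_sum (f := fun i => if i ∈ X then (0:ℚ) else β i)
          ?_ hi₀mem
        intro i _
        by_cases hx : i ∈ X <;> simp [hx, hpos i]

lemma exists_word : ∀ l : List (Module.End ℚ (ι →₀ ℚ)),
    (∀ y ∈ l, ∃ i : ι, y = R.reflection (simple i)) →
      ∃ L : List ι, R.wrd L = l.prod := by
  intro l
  induction l with
  | nil => exact fun _ => ⟨[], rfl⟩
  | cons g l ih =>
      intro hlmem
      obtain ⟨i, hgi⟩ := hlmem g List.mem_cons_self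
      obtain ⟨L, hL⟩ := ih (fun y hy => hlmem y (List.mem_cons_of_mem _ hy))
      refine ⟨i :: L, ?_⟩
      rw [wrd_cons, hL, List.prod_cons, hgi]
      rfl

lemma first_split {α : Type*} (U : Set α) :
    ∀ L : List α, (∃ x ∈ L, x ∈ U) →
      ∃ A b B, L = A ++ b :: B ∧ b ∈ U ∧ ∀ a ∈ A, a ∉ U := by
  intro L
  induction L with
  | nil => rintro ⟨x, hx, -⟩; simp at hx
  | cons a L ih =>
      intro h
      by_cases ha : a ∈ U
      · exact ⟨[], a, L, rfl, ha, by simp⟩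
      · obtain ⟨x, hx, hxU⟩ := h
        have hx' : x ∈ L := by
          rcases List.mem_cons.1 hx with rfl | h2
          · exact absurd hxU ha
          · exact h2
        obtain ⟨A, b, B, rfl, hb, hA⟩ := ih ⟨x, hx', hxU⟩
        refine ⟨a :: A, b, B, rfl, hb, ?_⟩
        intro a' ha'
        rcases List.mem_cons.1 ha' with rfl | h2
        · exact ha
        · exact hA a' h2


end SimpleRootSystem


open SimpleRootSystem in
/-- **Bounded `Y`-coefficient forces support near `Y`**: let `φ` be a dominant weight
(`⟨φ, α∨⟩ ≥ 0` for every simple root `α`) and `w ∈ W` an `X`-reduced element.  Write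
`(φ - wφ) + ∑_{α ∈ I(w)} α = ∑_{α ∈ Π} c_α α` (this equals `φ - w·φ` for the dot
action); if the `Y`-coefficient `∑_{α ∈ Y} c_α` equals `j`, then `w ∈ W(Y^(j))`. -/
theorem SimpleRootSystem.xReduced_mem_parabolic_of_yCoeff {ι : Type*}
    (R : SimpleRootSystem ι) (X : Set ι)
    (φ : ι →₀ ℚ) (hdom : ∀ i : ι, 0 ≤ R.coroot (simple i) φ)
    (w : Module.End ℚ (ι →₀ ℚ)) (hw : w ∈ R.weylGroup) (hred : R.IsXReduced X w)
    (j : ℕ)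
    (hcoeff : (∑ᶠ i ∈ Xᶜ, ((φ - w φ) + ∑ᶠ α ∈ R.inversions w, α) i) = (j : ℚ)) :
    w ∈ R.standardParabolic (R.yNbhd X j) := by
  classical
  obtain ⟨L₀, hL₀⟩ : ∃ L₀ : List ι, R.wrd L₀ = w := by
    obtain ⟨l, hlmem, hlprod⟩ := Submonoid.exists_list_of_mem_closure hw
    rw [← hlprod]
    exact R.exists_word l hlmem
  obtain ⟨L, hLprod, hLlen, hLgood⟩ := R.exists_good L₀
  rw [hL₀] at hLprod
  obtain ⟨hinv, hnd⟩ := R.inversions_eq hLgood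
  rw [hLprod] at hinv
  set F : Finset (ι →₀ ℚ) := (R.ts L).toFinset with hF
  have hFcard : F.card = L.length := by
    rw [hF, List.toFinset_card_of_nodup hnd, ts_length]
  have hinvF : R.inversions w = ↑F := by
    rw [hinv]; ext β; simp [hF]
  have hsum : (∑ᶠ α ∈ R.inversions w, α) = ∑ β ∈ F, β := by
    rw [hinvF, finsum_mem_coe_finset]
  have h0 : ∑ᶠ i ∈ Xᶜ, ((φ - w φ) + ∑ᶠ α ∈ R.inversions w, α) i
      = Yc X (φ - w φ) + ∑ β ∈ F, Yc X β := by
    rw [finsum_mem_compl_eq_Yc, hsum, map_add, map_sum]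
  have hYc : Yc X (φ - w φ) + ∑ β ∈ F, Yc X β = (j:ℚ) := by rw [← h0, hcoeff]
  have hdompos : IsPos (φ - w φ) := by
    rw [← hLprod]; exact R.good_dom hLgood hdom
  have hge1 : ∀ β ∈ F, (1:ℚ) ≤ Yc X β := by
    intro β hβF
    have hβts : β ∈ R.ts L := List.mem_toFinset.1 hβF
    have hβinv : β ∈ R.inversions w := by rw [hinv]; exact hβts
    have hβΔ : β ∈ R.Δ := R.ts_mem_delta hβts
    have hβpos : IsPos β := hβinv.1.2
    have hns : ¬ ((β.support : Set ι) ⊆ X) := by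
      intro hsub
      exact Set.eq_empty_iff_forall_notMem.1 hred β ⟨hβinv, hβΔ, hsub⟩
    exact R.Yc_ge_one hβΔ hβpos hns
  have hlenj : L.length ≤ j := by
    have h1 : (F.card : ℚ) ≤ ∑ β ∈ F, Yc X β := by
      have := Finset.card_nsmul_le_sum F (fun β => Yc X β) 1 hge1
      simpa using this
    have h2 : 0 ≤ Yc X (φ - w φ) := Yc_nonneg hdompos
    have h3 : (L.length : ℚ) ≤ (j : ℚ) := by
      rw [← hFcard]; linarith
    exact_mod_cast h3
  have hletter : ∀ t ∈ L, t ∈ R.yNbhd X j := by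
    intro t ht
    set U : Set ι := {s | ∃ q : R.dynkin.Walk t s, ∀ v ∈ q.support, v ∈ L} with hU
    have htU : t ∈ U := ⟨SimpleGraph.Walk.nil, by simp [ht]⟩
    by_cases hUX : ∀ s ∈ U, s ∈ X
    · exfalso
      obtain ⟨A, b, B, hsplit, hbU, hA⟩ := first_split U L ⟨t, ht, htU⟩
      have hzero : ∀ a ∈ A, R.coroot (simple a) (simple b) = 0 := by
        intro a ha
        have haL : a ∈ L := by rw [hsplit]; exact List.mem_append_left _ ha
        have hanU : a ∉ U := hA a ha
        have hne : a ≠ b := by rintro rfl; exact hanU hbU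
        have hnadj : ¬ R.dynkin.Adj b a := by
          intro hadj
          obtain ⟨q, hq⟩ := hbU
          refine hanU ⟨q.concat hadj, ?_⟩
          intro v hv
          rw [SimpleGraph.Walk.support_concat] at hv
          rcases List.mem_append.1 hv with h2 | h2
          · exact hq v h2
          · rw [List.mem_singleton] at h2; exact h2 ▸ haL
        have hnadj' : ¬ R.dynkin.Adj a b := fun h => hnadj h.symm
        simp only [SimpleRootSystem.dynkin] at hnadj'
        push_neg at hnadj'
        exact (hnadj' hne).2
      have hfixb : R.wrd A (simple b) = simple b := R.wrd_fix hzero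
      have hbts : (simple b : ι →₀ ℚ) ∈ R.ts L := by
        rw [hsplit]
        have := R.ts_mem_of_split A b B
        rwa [hfixb] at this
      have hbinv : (simple b : ι →₀ ℚ) ∈ R.inversions w := by rw [hinv]; exact hbts
      have hbdX : (simple b : ι →₀ ℚ) ∈ R.deltaX X := by
        refine ⟨R.simple_mem b, ?_⟩
        intro x hx
        have hxb : x = b := by
          have : (simple b : ι →₀ ℚ).support = {b} :=
            Finsupp.support_single_ne_zero b one_ne_zero
          rw [this] at hx
          simpa using hx
        exact hxb ▸ hUX b hbU
      exact Set.eq_empty_iff_forall_notMem.1 hred _ ⟨hbinv, hbdX⟩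
    · push_neg at hUX
      obtain ⟨y, hyU, hyX⟩ := hUX
      obtain ⟨q, hq⟩ := hyU
      have hpath := q.bypass_isPath
      have hsupp : ∀ v ∈ q.bypass.support, v ∈ L := fun v hv =>
        hq v (q.support_bypass_subset hv)
      have hndp : q.bypass.support.Nodup := hpath.support_nodup
      have hlen : q.bypass.length + 1 ≤ L.length := by
        have h1 : q.bypass.support.toFinset.card = q.bypass.support.length :=
          List.toFinset_card_of_nodup hndp
        have h2 : q.bypass.support.toFinset ⊆ L.toFinset := by
          intro v hv
          rw [List.mem_toFinset] at hv ⊢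
          exact hsupp v hv
        have h3 := Finset.card_le_card h2
        have h4 := List.toFinset_card_le L
        have h5 := SimpleGraph.Walk.length_support q.bypass
        omega
      refine ⟨y, hyX, ?_⟩
      have hedist := SimpleGraph.Walk.edist_le q.bypass
      have hlt : (q.bypass.length : ℕ∞) < (j : ℕ∞) := by
        have : q.bypass.length < j := by omega
        exact_mod_cast this
      exact lt_of_le_of_lt hedist hlt
  rw [← hLprod]
  show (L.map R.sr).prod ∈ _
  refine Submonoid.list_prod_mem _ ?_
  intro g hg
  rw [List.mem_map] at hg
  obtain ⟨i, hiL, rfl⟩ := hg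
  exact Submonoid.subset_closure ⟨i, hletter i hiL, rfl⟩
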